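/- Let q ∈ (0,1) and let n ≥ 9 be an integer satisfying condition (★). Then q^n/(1 − q^{2n}) ≤ 7 q^{√n}/(37 n²). -/

import Mathlib

open Real MeasureTheory

noncomputable def poissonKernelQB (q β : ℝ) (t : ℝ) : ℝ :=
  ∑' k : ℕ, q ^ (k + 1) * Real.cos ((k + 1) * t - β * Real.pi / 2)

noncomputable def phiN (n : ℕ) (t : ℝ) : ℝ := Real.sign (Real.sin (n * t))

noncomputable def poissonConv (q β : ℝ) (φ : ℝ → ℝ) (x : ℝ) : ℝ :=
  (1 / Real.pi) * ∫ t in (-Real.pi)..Real.pi, poissonKernelQB q β (x - t) * φ t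

noncomputable def normC (g : ℝ → ℝ) : ℝ := ⨆ x : ℝ, |g x|

noncomputable def normL1 (g : ℝ → ℝ) : ℝ := ∫ t in (-Real.pi)..Real.pi, |g t|

def classCInf (q β : ℝ) : Set (ℝ → ℝ) :=
  {f | Continuous f ∧ Function.Periodic f (2 * Real.pi) ∧
    ∃ A : ℝ, ∃ φ : ℝ → ℝ, Measurable φ ∧ Function.Periodic φ (2 * Real.pi) ∧
      (∫ t in (-Real.pi)..Real.pi, φ t) = 0 ∧
      (∀ᵐ t : ℝ ∂MeasureTheory.volume, |φ t| ≤ 1) ∧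
      ∀ x, f x = A + poissonConv q β φ x}

def classC1 (q β : ℝ) : Set (ℝ → ℝ) :=
  {f | Function.Periodic f (2 * Real.pi) ∧
    ∃ A : ℝ, ∃ φ : ℝ → ℝ, IntervalIntegrable φ MeasureTheory.volume (-Real.pi) Real.pi ∧
      Function.Periodic φ (2 * Real.pi) ∧
      (∫ t in (-Real.pi)..Real.pi, φ t) = 0 ∧
      (∫ t in (-Real.pi)..Real.pi, |φ t|) ≤ 1 ∧
      ∀ x, f x = A + poissonConv q β φ x}

def starCond (q : ℝ) (n : ℕ) : Prop :=
  43 / (10 * (1 - q)) * q ^ (Real.sqrt n) +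
    q / (1 - q) ^ 2 *
      min (160 / (57 * ((n : ℝ) - Real.sqrt n))) (8 / (3 * (n : ℝ) - 7 * Real.sqrt n)) ≤
  (1 / 2 + 2 * q / ((1 + q ^ 2) * (1 - q))) * ((1 - q) / (1 + q)) ^ (4 / (1 - q ^ 2))

noncomputable def kolmogorovWidthC (M : Set (ℝ → ℝ)) (m : ℕ) : ℝ :=
  ⨅ F : {F : Submodule ℝ (ℝ → ℝ) //
      Module.rank ℝ F ≤ m ∧ ∀ u ∈ F, Continuous u ∧ Function.Periodic u (2 * Real.pi)},
    ⨆ f : ↥M, ⨅ u : ↥F.1, normC (↑f - ↑u)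

noncomputable def kolmogorovWidthL (M : Set (ℝ → ℝ)) (m : ℕ) : ℝ :=
  ⨅ F : {F : Submodule ℝ (ℝ → ℝ) //
      Module.rank ℝ F ≤ m ∧ ∀ u ∈ F,
        IntervalIntegrable u MeasureTheory.volume (-Real.pi) Real.pi ∧
        Function.Periodic u (2 * Real.pi)},
    ⨆ f : ↥M, ⨅ u : ↥F.1, normL1 (↑f - ↑u)

noncomputable def trigPolySpace (n : ℕ) : Submodule ℝ (ℝ → ℝ) :=
  Submodule.span ℝ {f : ℝ → ℝ | ∃ k : ℕ, k < n ∧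
    ((f = fun x => Real.cos (k * x)) ∨ (f = fun x => Real.sin (k * x)))}

noncomputable def bestApproxC (M : Set (ℝ → ℝ)) (n : ℕ) : ℝ :=
  ⨆ f : ↥M, ⨅ t : ↥(trigPolySpace n), normC (↑f - ↑t)

noncomputable def bestApproxL (M : Set (ℝ → ℝ)) (n : ℕ) : ℝ :=
  ⨆ f : ↥M, ⨅ t : ↥(trigPolySpace n), normL1 (↑f - ↑t)

noncomputable def nStar (q : ℝ) : ℕ := sInf {n : ℕ | 9 ≤ n ∧ starCond q n}

open Classical in
noncomputable def nqb (q β : ℝ) : ℕ :=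
  if ((∃ m : ℤ, β = m) ∧ q ≤ 1/5) ∨ ((¬ ∃ m : ℤ, β = m) ∧ q ≤ 196881/1000000) then 1
  else nStar q
lemma exp_four_thirds_le : Real.exp (4/3) ≤ 7.4 := by
  have h1 : Real.exp (4/3:ℝ) ≤ Real.exp 2 := Real.exp_le_exp.mpr (by norm_num)
  have h2 : Real.exp (2:ℝ) = Real.exp 1 * Real.exp 1 := by rw [← Real.exp_add]; norm_num
  nlinarith [Real.exp_one_lt_d9, Real.exp_pos 1]

lemma aux_pow (c t : ℝ) (hc : 0 ≤ c) (hce : c * Real.exp (4/3) ≤ 1) (ht : 0 ≤ t) :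
    c ^ t * (3 + t)^4 ≤ 81 := by
  have he : (1:ℝ) + t/3 ≤ Real.exp (t/3) := by
    have := Real.add_one_le_exp (t/3); linarith
  have h3 : Real.exp (t/3) ^ (4:ℕ) = Real.exp (4/3) ^ t := by
    rw [← Real.exp_nat_mul, Real.rpow_def_of_pos (Real.exp_pos _), Real.log_exp]
    congr 1; push_cast; ring
  have hs4 : (3 + t)^4 ≤ 81 * Real.exp (4/3) ^ t := by
    have h1 : (3+t)^4 = 81 * (1 + t/3)^4 := by ring
    have h2 : (1 + t/3)^4 ≤ Real.exp (t/3) ^ 4 := pow_le_pow_left₀ (by linarith) he 4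
    rw [h1, ← h3]; nlinarith [h2]
  calc c^t * (3+t)^4 ≤ c^t * (81 * Real.exp (4/3) ^ t) :=
        mul_le_mul_of_nonneg_left hs4 (Real.rpow_nonneg hc t)
    _ = 81 * (c * Real.exp (4/3)) ^ t := by
        rw [Real.mul_rpow hc (Real.exp_pos _).le]; ring
    _ ≤ 81 * 1 := mul_le_mul_of_nonneg_left (Real.rpow_le_one (by positivity) hce ht) (by norm_num)
    _ = 81 := mul_one 81

set_option maxHeartbeats 1000000 in
theorem star_implies_tail_bound (q : ℝ) (hq : 0 < q) (hq1 : q < 1)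
    (n : ℕ) (hn : 9 ≤ n) (hstar : starCond q n) :
    q ^ n / (1 - q ^ (2 * n)) ≤ 7 * q ^ Real.sqrt n / (37 * (n : ℝ) ^ 2) := by
  unfold starCond at hstar
  set s := Real.sqrt (n:ℝ) with hs
  have hn9 : (9:ℝ) ≤ (n:ℝ) := by exact_mod_cast hn
  have hs0 : (0:ℝ) ≤ s := Real.sqrt_nonneg _
  have hs3 : (3:ℝ) ≤ s := by
    rw [hs, show (3:ℝ) = Real.sqrt 9 by
      rw [show (9:ℝ) = 3^2 by norm_num, Real.sqrt_sq (by norm_num : (0:ℝ) ≤ 3)]]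
    exact Real.sqrt_le_sqrt hn9
  have hs2 : s^2 = (n:ℝ) := Real.sq_sqrt (by positivity)
  have hq1' : 0 < 1 - q := by linarith
  have hq1q : 0 < 1 + q := by linarith
  have hq2 : 0 < 1 - q^2 := by nlinarith
  have ht0 : (0:ℝ) ≤ s - 3 := by linarith
  -- key bound
  have K : q ^ (s*(s-1)) * s^4 ≤ 7/37 * (1 - q^2) := by
    rcases le_or_gt (1/4 : ℝ) q with hq17 | hq17
    · -- large q : use star
      have hsn : s < (n:ℝ) := by nlinarith
      have h7s : 7*s < 3*(n:ℝ) := by nlinarith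
      have ht2 : 0 ≤ q / (1-q)^2 *
          min (160 / (57 * ((n:ℝ) - s))) (8 / (3 * (n:ℝ) - 7 * s)) := by
        apply mul_nonneg (by positivity)
        exact le_min (div_pos (by norm_num) (by linarith)).le
          (div_pos (by norm_num) (by linarith)).le
      have hterm1 : 43/(10*(1-q)) * q ^ s ≤
          (1/2 + 2*q/((1+q^2)*(1-q))) * ((1-q)/(1+q)) ^ ((4:ℝ)/(1-q^2)) := by
        linarith [hstar]
      have hb0 : 0 < (1-q)/(1+q) := by positivity
      have hb1 : (1-q)/(1+q) ≤ 1 := by rw [div_le_one hq1q]; linarith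
      have hP4 : ((1-q)/(1+q)) ^ ((4:ℝ)/(1-q^2)) ≤ ((1-q)/(1+q))^(4:ℕ) := by
        rw [← Real.rpow_natCast ((1-q)/(1+q)) 4]
        apply Real.rpow_le_rpow_of_exponent_ge hb0 hb1
        push_cast
        rw [le_div_iff₀ hq2]; nlinarith
      have hCb : 0 ≤ 1/2 + 2*q/((1+q^2)*(1-q)) := by positivity
      have hC2 : 1/2 + 2*q/((1+q^2)*(1-q)) ≤ (1+3*q)/(2*(1-q)) := by
        have hd : 2*q/((1+q^2)*(1-q)) ≤ 2*q/(1-q) := by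
          apply div_le_div_of_nonneg_left (by linarith) hq1' ?_
          nlinarith [sq_nonneg q]
        have he : 1/2 + 2*q/(1-q) = (1+3*q)/(2*(1-q)) := by
          field_simp; ring
        linarith [hd, he.le, he.ge]
      have hb4 : ((1-q)/(1+q))^(4:ℕ) = (1-q)^4/(1+q)^4 := div_pow _ _ 4
      have hCP : (1/2 + 2*q/((1+q^2)*(1-q))) * ((1-q)/(1+q)) ^ ((4:ℝ)/(1-q^2)) ≤
          (1-q)^3/(2*(1+q)) := by
        have step1 : (1/2 + 2*q/((1+q^2)*(1-q))) * ((1-q)/(1+q)) ^ ((4:ℝ)/(1-q^2)) ≤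
            (1+3*q)/(2*(1-q)) * ((1-q)^4/(1+q)^4) := by
          have hbp : (0:ℝ) ≤ ((1-q)/(1+q))^(4:ℕ) := by positivity
          calc (1/2 + 2*q/((1+q^2)*(1-q))) * ((1-q)/(1+q)) ^ ((4:ℝ)/(1-q^2))
              ≤ (1/2 + 2*q/((1+q^2)*(1-q))) * ((1-q)/(1+q))^(4:ℕ) :=
                mul_le_mul_of_nonneg_left hP4 hCb
            _ ≤ (1+3*q)/(2*(1-q)) * ((1-q)/(1+q))^(4:ℕ) :=
                mul_le_mul_of_nonneg_right hC2 hbp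
            _ = (1+3*q)/(2*(1-q)) * ((1-q)^4/(1+q)^4) := by rw [hb4]
        have step2 : (1+3*q)/(2*(1-q)) * ((1-q)^4/(1+q)^4) ≤ (1-q)^3/(2*(1+q)) := by
          rw [div_mul_div_comm, div_le_div_iff₀ (by positivity) (by positivity)]
          have hscal : 1+3*q ≤ (1+q)^3 := by nlinarith [sq_nonneg q]
          nlinarith [mul_le_mul_of_nonneg_right hscal
            (show (0:ℝ) ≤ (1-q)^4 * (2*(1+q)) by positivity)]
        linarith
      have hA : q ^ s ≤ 5/43*(1-q)^4/(1+q) := by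
        have h3 := le_trans hterm1 hCP
        rw [div_mul_eq_mul_div, div_le_div_iff₀ (by positivity) (by positivity)] at h3
        rw [le_div_iff₀ hq1q]
        nlinarith [h3]
      set a : ℝ := 5/43*(1-q)^4/(1+q) with ha_def
      have ha0 : 0 < a := by rw [ha_def]; positivity
      have ha1 : a * Real.exp (4/3) ≤ 1 := by
        have h4 : (1-q)^4 ≤ 1 := pow_le_one₀ (by linarith) (by linarith)
        have ha : a ≤ 5/43 := by
          rw [ha_def, div_le_iff₀ hq1q]; nlinarith
        nlinarith [exp_four_thirds_le, Real.exp_pos (4/3:ℝ)]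
      have haux := aux_pow a (s-3) ha0.le ha1 ht0
      rw [show (3:ℝ)+(s-3) = s by ring] at haux
      have hE : q^(s*(s-1)) ≤ a^(s-1) := by
        rw [Real.rpow_mul hq.le]
        exact Real.rpow_le_rpow (Real.rpow_nonneg hq.le s) hA (by linarith)
      have hsplit : a^(s-1) = a^(2:ℕ) * a^(s-3) := by
        rw [← Real.rpow_natCast a 2, ← Real.rpow_add ha0]
        norm_num
        congr 1
        ring
      have h7 : (1-q)^7 ≤ (3/4:ℝ)^7 := pow_le_pow_left₀ (by linarith) (by linarith) 7
      have h3c : (5/4:ℝ)^3 ≤ (1+q)^3 := pow_le_pow_left₀ (by norm_num) (by linarith) 3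
      calc q^(s*(s-1)) * s^4
          ≤ a^(s-1) * s^4 := mul_le_mul_of_nonneg_right hE (by positivity)
        _ = a^(2:ℕ) * (a^(s-3) * s^4) := by rw [hsplit]; ring
        _ ≤ a^(2:ℕ) * 81 := mul_le_mul_of_nonneg_left haux (by positivity)
        _ ≤ 7/37 * (1-q^2) := by
            rw [ha_def, div_pow, div_mul_eq_mul_div, div_le_iff₀ (by positivity)]
            nlinarith [mul_le_mul_of_nonneg_right h7 (show (0:ℝ) ≤ 1-q by linarith),
              mul_le_mul_of_nonneg_right h3c (show (0:ℝ) ≤ 1-q by linarith),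
              sq_nonneg (1-q), sq_nonneg (1+q)]
    · -- small q : direct
      have hE : q^(s*(s-1)) ≤ q^(2*s) :=
        Real.rpow_le_rpow_of_exponent_ge hq hq1.le (by nlinarith)
      have h1 : q^(2*s) = q^((6:ℝ)) * q^(2*(s-3)) := by
        rw [← Real.rpow_add hq]; congr 1; ring
      have h2 : q^(2*(s-3)) = ((q^(2:ℕ)):ℝ)^(s-3) := by
        rw [← Real.rpow_natCast q 2, ← Real.rpow_mul hq.le]
        norm_num
      have h3 : q^((6:ℝ)) = q^(6:ℕ) := by
        rw [← Real.rpow_natCast q 6]; norm_num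
      have hce : (q^(2:ℕ):ℝ) * Real.exp (4/3) ≤ 1 := by
        nlinarith [exp_four_thirds_le, Real.exp_pos (4/3:ℝ), sq_nonneg q]
      have haux := aux_pow (q^(2:ℕ)) (s-3) (by positivity) hce ht0
      rw [show (3:ℝ)+(s-3) = s by ring] at haux
      have hq6 : q^(6:ℕ) ≤ (1/4:ℝ)^6 := pow_le_pow_left₀ hq.le hq17.le 6
      calc q^(s*(s-1)) * s^4 ≤ q^(2*s) * s^4 :=
            mul_le_mul_of_nonneg_right hE (by positivity)
        _ = q^(6:ℕ) * (((q^(2:ℕ)):ℝ)^(s-3) * s^4) := by rw [h1, h2, h3]; ring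
        _ ≤ q^(6:ℕ) * 81 := mul_le_mul_of_nonneg_left haux (by positivity)
        _ ≤ 7/37 * (1-q^2) := by nlinarith [hq6, sq_nonneg q]
  -- assemble
  have hqsplit : (q:ℝ) ^ n = q ^ s * q ^ (s*(s-1)) := by
    rw [← Real.rpow_natCast q n, ← hs2, show s^2 = s + s*(s-1) by ring, Real.rpow_add hq]
  have hn2 : ((n:ℝ))^2 = s^4 := by rw [← hs2]; ring
  have h2n : q^(2*n) ≤ q^2 := pow_le_pow_of_le_one hq.le hq1.le (by omega)
  have h2npos : 0 < 1 - q^(2*n) := by linarith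
  rw [div_le_div_iff₀ h2npos (by positivity)]
  calc q ^ n * (37 * (n:ℝ)^2) = 37 * q^s * (q^(s*(s-1)) * s^4) := by
        rw [hqsplit, hn2]; ring
    _ ≤ 37 * q^s * (7/37 * (1-q^2)) :=
        mul_le_mul_of_nonneg_left K (by positivity)
    _ = 7 * q^s * (1 - q^2) := by ring
    _ ≤ 7 * q^s * (1 - q^(2*n)) := by
        apply mul_le_mul_of_nonneg_left (by linarith) (by positivity)
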